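/- For every (a,b) ∈ (1,2] × [1,2] with ab ≤ 2, the triangle T with vertices (0,0), (1,1), (2,0) is invariant under the map Ψ_{a,b}: for every (x,y) ∈ T, Ψ_{a,b}(x,y) ∈ T. -/
import Mathlib


/-- The piecewise map Ψ_{a,b}. -/
noncomputable def Psi (a b : ℝ) (p : ℝ × ℝ) : ℝ × ℝ :=
  if p.1 ≤ 1 then
    if p.1 + p.2 ≤ b then (a * p.1, a * p.2) else (a * (b - p.2), a * (b - p.1))
  else
    if 2 - b ≤ p.1 - p.2 then (a * (2 - p.1), a * p.2)
    else (a * (b - p.2), a * (b - 2 + p.1))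

/-- The triangle T with vertices (0,0), (1,1), (2,0). -/
def Triangle : Set (ℝ × ℝ) := {p | 0 ≤ p.2 ∧ p.2 ≤ p.1 ∧ p.1 + p.2 ≤ 2}

theorem triangle_invariant (a b : ℝ) (ha1 : 1 < a) (ha2 : a ≤ 2)
    (hb1 : 1 ≤ b) (hb2 : b ≤ 2) (hab : a * b ≤ 2) :
    ∀ p ∈ Triangle, Psi a b p ∈ Triangle := by
  rintro ⟨x, y⟩ ⟨hy, hyx, hxy⟩
  simp only [Triangle, Psi, Set.mem_setOf_eq] at *
  have ha0 : (0:ℝ) < a := by linarith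
  split_ifs with h1 h2 h3 <;> simp only [Prod.fst, Prod.snd] <;>
    refine ⟨?_, ?_, ?_⟩ <;> nlinarith [mul_le_mul_of_nonneg_left hxy ha0.le]
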